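/- For every k ≥ 5, the porous exponential domination number of the k-th Apollonian network satisfies γ*_e(G_k) ≤ 2·3^(k-5). -/

import Mathlib

/-- A family of Apollonian networks, given by a vertex set `Vert` together with a
generation labeling `gen` and an adjacency relation `adj`, satisfying the recursive
construction: the first generation `U₁` consists of three pairwise adjacent vertices
(forming `G₁`); and for each `k ≥ 1`, for each vertex `u` of generation `k` and each
adjacent pair `{x, y}` of neighbors of `u` in `G_k`, exactly one new vertex of
generation `k + 1` is created, adjacent to exactly `u`, `x`, and `y`.
The `k`-th Apollonian network `G_k` is the induced subgraph on the vertices of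
generation at most `k`. -/
structure ApollonianNetwork where
  Vert : Type
  adj : Vert → Vert → Prop
  adj_symm : ∀ a b, adj a b → adj b a
  adj_irrefl : ∀ a, ¬ adj a a
  gen : Vert → ℕ
  gen_pos : ∀ v, 1 ≤ gen v
  /-- The first generation consists of exactly three vertices. -/
  U1_card : ∃ a b c : Vert, a ≠ b ∧ a ≠ c ∧ b ≠ c ∧ {v | gen v = 1} = {a, b, c}
  /-- `G₁` is a complete graph on the first generation. -/
  U1_complete : ∀ a b, gen a = 1 → gen b = 1 → a ≠ b → adj a b
  /-- All edges join vertices of distinct generations, except within generation 1. -/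
  adj_gen : ∀ a b, adj a b → gen a = gen b → gen a = 1
  /-- Every vertex `v` of generation `k ≥ 2` is adjacent, among the vertices of earlier
  generations, to exactly three vertices `u`, `x`, `y`, where `u` has generation `k - 1`
  and `x`, `y` are neighbors of `u` in `G_{k-1}` that are adjacent to each other. -/
  created : ∀ v, 2 ≤ gen v → ∃ u x y,
    gen u = gen v - 1 ∧ gen x ≤ gen v - 1 ∧ gen y ≤ gen v - 1 ∧
    adj u x ∧ adj u y ∧ adj x y ∧
    {w | adj v w ∧ gen w < gen v} = {u, x, y}
  /-- For each `k ≥ 1`, each vertex `u` of generation `k`, and each adjacent pair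
  `{x, y}` of neighbors of `u` in `G_k`, there is exactly one vertex of generation
  `k + 1` whose neighbors in `G_{k+1}` are exactly `u`, `x`, and `y`. -/
  attach : ∀ k, 1 ≤ k → ∀ u x y,
    gen u = k → gen x ≤ k → gen y ≤ k → x ≠ y →
    adj u x → adj u y → adj x y →
    ∃! v, gen v = k + 1 ∧ {w | adj v w ∧ gen w ≤ k} = ({u, x, y} : Set Vert)

/-- The `k`-th Apollonian network `G_k`: the induced subgraph on the vertices of
generation at most `k`. -/
def ApollonianNetwork.G (A : ApollonianNetwork) (k : ℕ) :
    SimpleGraph {v : A.Vert // A.gen v ≤ k} where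
  Adj a b := A.adj a b
  symm := ⟨fun a b h => A.adj_symm a b h⟩
  loopless := ⟨fun a h => A.adj_irrefl a h⟩

open Classical in
/-- The porous exponential domination weight of a set `S` at a vertex `v`:
`∑_{u ∈ S} 1 / 2 ^ (d(u, v) - 1)`, where vertices at infinite distance from `v`
contribute `0`.  (Note `2 * (1/2) ^ d = 1 / 2 ^ (d - 1)` including for `d = 0`.) -/
noncomputable def expWeight {V : Type*} (G : SimpleGraph V) (S : Finset V) (v : V) : ℝ :=
  ∑ u ∈ S, if G.Reachable u v then 2 * (2 : ℝ)⁻¹ ^ G.dist u v else 0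

/-- `S` is a porous exponential dominating set for `G` if every vertex receives
total weight at least 1. -/
def IsPorousExpDomSet {V : Type*} (G : SimpleGraph V) (S : Finset V) : Prop :=
  ∀ v, 1 ≤ expWeight G S v

/-- The porous exponential domination number `γ*ₑ(G)`: the smallest cardinality of a
porous exponential dominating set for `G` (`⊤` if there is none). -/
noncomputable def porousExpDomNum {V : Type*} (G : SimpleGraph V) : ℕ∞ :=
  sInf {n : ℕ∞ | ∃ S : Finset V, IsPorousExpDomSet G S ∧ (S.card : ℕ∞) = n}

namespace ApNet16

variable (A : ApollonianNetwork)

/-- The set of neighbors of `v` of strictly lower generation. -/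
def down (v : A.Vert) : Set A.Vert := {w | A.adj v w ∧ A.gen w < A.gen v}

lemma adj_ne {x y : A.Vert} (h : A.adj x y) : x ≠ y :=
  fun e => A.adj_irrefl y (e ▸ h)

lemma gen_lt {u x : A.Vert} (h : A.adj u x) (hx : A.gen x ≤ A.gen u) (h2 : 2 ≤ A.gen u) :
    A.gen x < A.gen u := by
  rcases lt_or_eq_of_le hx with h' | h'
  · exact h'
  · have := A.adj_gen u x h h'.symm
    omega

lemma unique_of_down (j : ℕ) (hj : 1 ≤ j) (u x y : A.Vert)
    (hu : A.gen u = j) (hx : A.gen x ≤ j) (hy : A.gen y ≤ j) (hxy : x ≠ y)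
    (aux : A.adj u x) (auy : A.adj u y) (axy : A.adj x y)
    {v v' : A.Vert} (hv : A.gen v = j + 1) (hv' : A.gen v' = j + 1)
    (hD : down A v = {u, x, y}) (hD' : down A v' = {u, x, y}) : v = v' := by
  obtain ⟨t, _, ht⟩ := A.attach j hj u x y hu hx hy hxy aux auy axy
  have conv : ∀ z : A.Vert, A.gen z = j + 1 → down A z = {u, x, y} →
      {w | A.adj z w ∧ A.gen w ≤ j} = ({u, x, y} : Set A.Vert) := by
    intro z hz hDz
    rw [← hDz]
    ext w
    simp only [down, Set.mem_setOf_eq, hz]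
    exact ⟨fun ⟨h1, h2⟩ => ⟨h1, by omega⟩, fun ⟨h1, h2⟩ => ⟨h1, by omega⟩⟩
  rw [ht v ⟨hv, conv v hv hD⟩, ht v' ⟨hv', conv v' hv' hD'⟩]

open Classical in
/-- the triple of lower neighbors of a vertex of generation at least 2 -/
noncomputable def trip (u : A.Vert) : A.Vert × A.Vert × A.Vert :=
  if h : 2 ≤ A.gen u then
    ⟨(A.created u h).choose, (A.created u h).choose_spec.choose,
      (A.created u h).choose_spec.choose_spec.choose⟩
  else ⟨u, u, u⟩

lemma trip_spec {u : A.Vert} (h : 2 ≤ A.gen u) :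
    A.gen (trip A u).1 = A.gen u - 1 ∧ A.gen (trip A u).2.1 ≤ A.gen u - 1 ∧
    A.gen (trip A u).2.2 ≤ A.gen u - 1 ∧
    A.adj (trip A u).1 (trip A u).2.1 ∧ A.adj (trip A u).1 (trip A u).2.2 ∧
    A.adj (trip A u).2.1 (trip A u).2.2 ∧
    down A u = {(trip A u).1, (trip A u).2.1, (trip A u).2.2} := by
  simp only [trip, dif_pos h]
  exact (A.created u h).choose_spec.choose_spec.choose_spec

def Uset (j : ℕ) : Set A.Vert := {v | A.gen v = j}

lemma Bset_aux (j : ℕ) (hj : 1 ≤ j) (hfin : (Uset A j).Finite)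
    (p : A.Vert → A.Vert × A.Vert)
    (hp : ∀ u, A.gen u = j → A.gen (p u).1 ≤ j ∧ A.gen (p u).2 ≤ j ∧
      A.adj u (p u).1 ∧ A.adj u (p u).2 ∧ A.adj (p u).1 (p u).2) :
    {v | A.gen v = j + 1 ∧ ∃ u, A.gen u = j ∧ down A v = {u, (p u).1, (p u).2}}.Finite ∧
    {v | A.gen v = j + 1 ∧ ∃ u, A.gen u = j ∧
      down A v = {u, (p u).1, (p u).2}}.ncard ≤ (Uset A j).ncard := by
  classical
  set B := {v | A.gen v = j + 1 ∧ ∃ u, A.gen u = j ∧ down A v = {u, (p u).1, (p u).2}} with hB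
  set f : A.Vert → A.Vert := fun v =>
    if h : ∃ u, A.gen u = j ∧ down A v = {u, (p u).1, (p u).2} then h.choose else v with hf
  have hspec : ∀ v ∈ B, A.gen (f v) = j ∧ down A v = {f v, (p (f v)).1, (p (f v)).2} := by
    intro v hv
    have h := hv.2
    simp only [hf]
    rw [dif_pos h]
    exact h.choose_spec
  have hmaps : ∀ v ∈ B, f v ∈ Uset A j := fun v hv => (hspec v hv).1
  have hinj : Set.InjOn f B := by
    intro v hv v' hv' he
    obtain ⟨hg, hD⟩ := hspec v hv
    obtain ⟨hg', hD'⟩ := hspec v' hv'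
    rw [he] at hD hg
    obtain ⟨h1, h2, h3, h4, h5⟩ := hp (f v') hg
    exact unique_of_down A j hj (f v') (p (f v')).1 (p (f v')).2 hg h1 h2 (adj_ne A h5)
      h3 h4 h5 hv.1 hv'.1 hD hD'
  refine ⟨?_, Set.ncard_le_ncard_of_injOn f hmaps hinj hfin⟩
  apply Set.Finite.of_finite_image _ hinj
  exact hfin.subset (by rintro _ ⟨v, hv, rfl⟩; exact hmaps v hv)

end ApNet16
namespace ApNet16

variable (A : ApollonianNetwork)

lemma Uset_step (j : ℕ) (hj : 2 ≤ j) (hfin : (Uset A j).Finite) :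
    (Uset A (j + 1)).Finite ∧ (Uset A (j + 1)).ncard ≤ 3 * (Uset A j).ncard := by
  have hp1 : ∀ u, A.gen u = j → A.gen (trip A u).2.1 ≤ j ∧ A.gen (trip A u).2.2 ≤ j ∧
      A.adj u (trip A u).2.1 ∧ A.adj u (trip A u).2.2 ∧
      A.adj (trip A u).2.1 (trip A u).2.2 := by
    intro u hu
    obtain ⟨g1, g2, g3, a1, a2, a3, hDu⟩ := trip_spec A (show 2 ≤ A.gen u by omega)
    have hX : (trip A u).2.1 ∈ down A u := by rw [hDu]; simp
    have hY : (trip A u).2.2 ∈ down A u := by rw [hDu]; simp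
    exact ⟨by omega, by omega, hX.1, hY.1, a3⟩
  have hp2 : ∀ u, A.gen u = j → A.gen (trip A u).1 ≤ j ∧ A.gen (trip A u).2.2 ≤ j ∧
      A.adj u (trip A u).1 ∧ A.adj u (trip A u).2.2 ∧
      A.adj (trip A u).1 (trip A u).2.2 := by
    intro u hu
    obtain ⟨g1, g2, g3, a1, a2, a3, hDu⟩ := trip_spec A (show 2 ≤ A.gen u by omega)
    have hU : (trip A u).1 ∈ down A u := by rw [hDu]; simp
    have hY : (trip A u).2.2 ∈ down A u := by rw [hDu]; simp
    exact ⟨by omega, by omega, hU.1, hY.1, a2⟩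
  have hp3 : ∀ u, A.gen u = j → A.gen (trip A u).1 ≤ j ∧ A.gen (trip A u).2.1 ≤ j ∧
      A.adj u (trip A u).1 ∧ A.adj u (trip A u).2.1 ∧
      A.adj (trip A u).1 (trip A u).2.1 := by
    intro u hu
    obtain ⟨g1, g2, g3, a1, a2, a3, hDu⟩ := trip_spec A (show 2 ≤ A.gen u by omega)
    have hU : (trip A u).1 ∈ down A u := by rw [hDu]; simp
    have hX : (trip A u).2.1 ∈ down A u := by rw [hDu]; simp
    exact ⟨by omega, by omega, hU.1, hX.1, a1⟩
  have hb1 := Bset_aux A j (by omega) hfin (fun u => ((trip A u).2.1, (trip A u).2.2)) hp1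
  have hb2 := Bset_aux A j (by omega) hfin (fun u => ((trip A u).1, (trip A u).2.2)) hp2
  have hb3 := Bset_aux A j (by omega) hfin (fun u => ((trip A u).1, (trip A u).2.1)) hp3
  set B1 := {v | A.gen v = j + 1 ∧ ∃ u, A.gen u = j ∧
      down A v = {u, (trip A u).2.1, (trip A u).2.2}} with hB1def
  set B2 := {v | A.gen v = j + 1 ∧ ∃ u, A.gen u = j ∧
      down A v = {u, (trip A u).1, (trip A u).2.2}} with hB2def
  set B3 := {v | A.gen v = j + 1 ∧ ∃ u, A.gen u = j ∧
      down A v = {u, (trip A u).1, (trip A u).2.1}} with hB3def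
  have hb1' : B1.Finite ∧ B1.ncard ≤ (Uset A j).ncard := hb1
  have hb2' : B2.Finite ∧ B2.ncard ≤ (Uset A j).ncard := hb2
  have hb3' : B3.Finite ∧ B3.ncard ≤ (Uset A j).ncard := hb3
  have hcov : Uset A (j + 1) ⊆ B1 ∪ B2 ∪ B3 := by
    intro v hv
    have hgv : A.gen v = j + 1 := hv
    obtain ⟨u, x, y, hu, hx, hy, aux, auy, axy, hD⟩ := A.created v (by omega)
    have hu' : A.gen u = j := by omega
    have h2u : 2 ≤ A.gen u := by omega
    obtain ⟨g1, g2, g3, a1, a2, a3, hDu⟩ := trip_spec A h2u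
    have hD' : down A v = {u, x, y} := hD
    have hxm : x ∈ ({(trip A u).1, (trip A u).2.1, (trip A u).2.2} : Set A.Vert) := by
      rw [← hDu]; exact ⟨aux, gen_lt A aux (by omega) h2u⟩
    have hym : y ∈ ({(trip A u).1, (trip A u).2.1, (trip A u).2.2} : Set A.Vert) := by
      rw [← hDu]; exact ⟨auy, gen_lt A auy (by omega) h2u⟩
    have hxy : x ≠ y := adj_ne A axy
    simp only [Set.mem_insert_iff, Set.mem_singleton_iff] at hxm hym
    rcases hxm with rfl | rfl | rfl <;> rcases hym with rfl | rfl | rfl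
    · exact absurd rfl hxy
    · exact Or.inr ⟨hgv, u, hu', hD'⟩
    · exact Or.inl (Or.inr ⟨hgv, u, hu', hD'⟩)
    · refine Or.inr ⟨hgv, u, hu', ?_⟩
      rw [hD', Set.pair_comm]
    · exact absurd rfl hxy
    · exact Or.inl (Or.inl ⟨hgv, u, hu', hD'⟩)
    · refine Or.inl (Or.inr ⟨hgv, u, hu', ?_⟩)
      rw [hD', Set.pair_comm]
    · refine Or.inl (Or.inl ⟨hgv, u, hu', ?_⟩)
      rw [hD', Set.pair_comm]
    · exact absurd rfl hxy
  have hfinU : (Uset A (j + 1)).Finite :=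
    (((hb1'.1.union hb2'.1).union hb3'.1)).subset hcov
  refine ⟨hfinU, ?_⟩
  calc (Uset A (j + 1)).ncard ≤ (B1 ∪ B2 ∪ B3).ncard :=
        Set.ncard_le_ncard hcov ((hb1'.1.union hb2'.1).union hb3'.1)
    _ ≤ (B1 ∪ B2).ncard + B3.ncard := Set.ncard_union_le _ _
    _ ≤ B1.ncard + B2.ncard + B3.ncard := by
        have := Set.ncard_union_le B1 B2; omega
    _ ≤ 3 * (Uset A j).ncard := by
        have := hb1'.2; have := hb2'.2; have := hb3'.2; omega

end ApNet16
namespace ApNet16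

variable (A : ApollonianNetwork)

lemma Uset_two : (Uset A 2).Finite ∧ (Uset A 2).ncard ≤ 1 := by
  obtain ⟨a, b, c, hab, hac, hbc, hU1⟩ := A.U1_card
  have ha1 : A.gen a = 1 := by
    have : a ∈ ({a, b, c} : Set A.Vert) := by simp
    rw [← hU1] at this; exact this
  have hb1 : A.gen b = 1 := by
    have : b ∈ ({a, b, c} : Set A.Vert) := by simp
    rw [← hU1] at this; exact this
  have hc1 : A.gen c = 1 := by
    have : c ∈ ({a, b, c} : Set A.Vert) := by simp
    rw [← hU1] at this; exact this
  have hD2 : ∀ v, A.gen v = 2 → down A v = {a, b, c} := by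
    intro v hv
    obtain ⟨u, x, y, hu, hx, hy, aux, auy, axy, hD⟩ := A.created v (by omega)
    have hD' : down A v = {u, x, y} := hD
    have hgu : A.gen u = 1 := by omega
    have hgx : A.gen x = 1 := by have := A.gen_pos x; omega
    have hgy : A.gen y = 1 := by have := A.gen_pos y; omega
    have hum : u = a ∨ u = b ∨ u = c := by
      have h : u ∈ {v | A.gen v = 1} := hgu
      rw [hU1] at h; simpa using h
    have hxm : x = a ∨ x = b ∨ x = c := by
      have h : x ∈ {v | A.gen v = 1} := hgx
      rw [hU1] at h; simpa using h
    have hym : y = a ∨ y = b ∨ y = c := by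
      have h : y ∈ {v | A.gen v = 1} := hgy
      rw [hU1] at h; simpa using h
    have hux : u ≠ x := adj_ne A aux
    have huy : u ≠ y := adj_ne A auy
    have hxy : x ≠ y := adj_ne A axy
    rw [hD']
    rcases hum with rfl | rfl | rfl <;> rcases hxm with rfl | rfl | rfl <;>
      rcases hym with rfl | rfl | rfl <;>
      first
        | (ext z; simp only [Set.mem_insert_iff, Set.mem_singleton_iff]; tauto)
        | simp_all
  have hsub : ∀ v ∈ Uset A 2, ∀ v' ∈ Uset A 2, v = v' := by
    intro v hv v' hv'
    exact unique_of_down A 1 le_rfl a b c ha1 (by omega) (by omega) hbc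
      (A.U1_complete a b ha1 hb1 hab) (A.U1_complete a c ha1 hc1 hac)
      (A.U1_complete b c hb1 hc1 hbc) hv hv' (hD2 v hv) (hD2 v' hv')
  rcases (Uset A 2).eq_empty_or_nonempty with he | ⟨w, hw⟩
  · rw [he]; simp
  · have hss : Uset A 2 ⊆ {w} := fun z hz => hsub z hz w hw
    exact ⟨(Set.finite_singleton w).subset hss,
      le_trans (Set.ncard_le_ncard hss (Set.finite_singleton w)) (by simp)⟩

lemma Uset_card : ∀ j, 2 ≤ j → (Uset A j).Finite ∧ (Uset A j).ncard ≤ 3 ^ (j - 2) := by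
  intro j hj
  induction j, hj using Nat.le_induction with
  | base => simpa using Uset_two A
  | succ n hn ih =>
    obtain ⟨hf, hc⟩ := ih
    obtain ⟨hf', hc'⟩ := Uset_step A n hn hf
    refine ⟨hf', ?_⟩
    rw [show n + 1 - 2 = (n - 2) + 1 by omega, pow_succ]
    omega

def Wset (m : ℕ) : Set A.Vert := {v | 2 ≤ A.gen v ∧ A.gen v ≤ m}

lemma Wset_card : ∀ m, 2 ≤ m → (Wset A m).Finite ∧ 2 * (Wset A m).ncard + 1 ≤ 3 ^ (m - 1) := by
  intro m hm
  induction m, hm using Nat.le_induction with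
  | base =>
    have h2 := Uset_two A
    have he : Wset A 2 = Uset A 2 := by
      ext v; simp only [Wset, Uset, Set.mem_setOf_eq]; omega
    rw [he]
    refine ⟨h2.1, ?_⟩
    have := h2.2
    norm_num
    omega
  | succ n hn ih =>
    obtain ⟨hUf, hUc⟩ := Uset_card A (n + 1) (by omega)
    have hsub : Wset A (n + 1) ⊆ Wset A n ∪ Uset A (n + 1) := by
      intro v hv
      obtain ⟨h1, h2⟩ := hv
      by_cases h : A.gen v ≤ n
      · exact Or.inl ⟨h1, h⟩
      · exact Or.inr (show A.gen v = n + 1 by omega)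
    have hfin := (ih.1.union hUf).subset hsub
    refine ⟨hfin, ?_⟩
    have hle := Set.ncard_le_ncard hsub (ih.1.union hUf)
    have hle2 := Set.ncard_union_le (Wset A n) (Uset A (n + 1))
    have hW := ih.2
    rw [show n + 1 - 2 = n - 1 by omega] at hUc
    rw [show n + 1 - 1 = (n - 1) + 1 by omega, pow_succ]
    omega

end ApNet16
namespace ApNet16

variable (A : ApollonianNetwork)

lemma low_nbr (m : ℕ) (hm : 2 ≤ m) (v : A.Vert) (h1 : m < A.gen v) (h2 : A.gen v ≤ m + 3) :
    ∃ s, A.adj v s ∧ A.gen s ≤ m := by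
  rcases (show A.gen v = m + 1 ∨ A.gen v = m + 2 ∨ A.gen v = m + 3 by omega) with hg | hg | hg
  · obtain ⟨u, x, y, hu, hx, hy, aux, auy, axy, hD⟩ := A.created v (by omega)
    have hD' : down A v = {u, x, y} := hD
    have hum : u ∈ down A v := by rw [hD']; simp
    exact ⟨u, hum.1, by omega⟩
  · obtain ⟨u, x, y, hu, hx, hy, aux, auy, axy, hD⟩ := A.created v (by omega)
    have hD' : down A v = {u, x, y} := hD
    have hxm : x ∈ down A v := by rw [hD']; simp
    have hgx : A.gen x < A.gen u := gen_lt A aux (by omega) (by omega)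
    exact ⟨x, hxm.1, by omega⟩
  · obtain ⟨u, x, y, hu, hx, hy, aux, auy, axy, hD⟩ := A.created v (by omega)
    have hD' : down A v = {u, x, y} := hD
    have hxm : x ∈ down A v := by rw [hD']; simp
    have hym : y ∈ down A v := by rw [hD']; simp
    have h2u : 2 ≤ A.gen u := by omega
    have hgx : A.gen x < A.gen u := gen_lt A aux (by omega) h2u
    have hgy : A.gen y < A.gen u := gen_lt A auy (by omega) h2u
    obtain ⟨u1, x1, y1, hu1, hx1, hy1, bux, buy, bxy, hDu⟩ := A.created u h2u
    have hDu' : down A u = {u1, x1, y1} := hDu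
    have hgx1 : A.gen x1 < A.gen u1 := by
      have := gen_lt A bux (by omega) (by omega)
      omega
    have hgy1 : A.gen y1 < A.gen u1 := by
      have := gen_lt A buy (by omega) (by omega)
      omega
    have hxmem : x ∈ ({u1, x1, y1} : Set A.Vert) := by rw [← hDu']; exact ⟨aux, hgx⟩
    have hymem : y ∈ ({u1, x1, y1} : Set A.Vert) := by rw [← hDu']; exact ⟨auy, hgy⟩
    have hxy : x ≠ y := adj_ne A axy
    simp only [Set.mem_insert_iff, Set.mem_singleton_iff] at hxmem hymem
    rcases hxmem with rfl | rfl | rfl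
    · rcases hymem with rfl | rfl | rfl
      · exact absurd rfl hxy
      · exact ⟨y, hym.1, by omega⟩
      · exact ⟨y, hym.1, by omega⟩
    · exact ⟨x, hxm.1, by omega⟩
    · exact ⟨x, hxm.1, by omega⟩

lemma reachable_dist_one {V : Type*} {G : SimpleGraph V} {x y : V} (h : G.Adj x y) :
    G.Reachable x y ∧ G.dist x y ≤ 1 := by
  refine ⟨h.reachable, ?_⟩
  simpa using SimpleGraph.dist_le (SimpleGraph.Walk.cons h SimpleGraph.Walk.nil)

lemma reachable_dist_two {V : Type*} {G : SimpleGraph V} {x y z : V}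
    (h1 : G.Adj x y) (h2 : G.Adj y z) : G.Reachable x z ∧ G.dist x z ≤ 2 := by
  refine ⟨⟨SimpleGraph.Walk.cons h1 (SimpleGraph.Walk.cons h2 SimpleGraph.Walk.nil)⟩, ?_⟩
  simpa using SimpleGraph.dist_le (SimpleGraph.Walk.cons h1 (SimpleGraph.Walk.cons h2 SimpleGraph.Walk.nil))

open Classical in
lemma single_bound {V : Type*} (G : SimpleGraph V) (S : Finset V) (v s : V) (hs : s ∈ S)
    (n : ℕ) (hr : G.Reachable s v) (hd : G.dist s v ≤ n) :
    2 * (2 : ℝ)⁻¹ ^ n ≤ expWeight G S v := by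
  unfold expWeight
  have h1 : 2 * (2 : ℝ)⁻¹ ^ n ≤
      (if G.Reachable s v then 2 * (2 : ℝ)⁻¹ ^ G.dist s v else 0) := by
    rw [if_pos hr]
    have := pow_le_pow_of_le_one (by norm_num : (0:ℝ) ≤ 2⁻¹) (by norm_num : (2:ℝ)⁻¹ ≤ 1) hd
    linarith
  have h2 : ∀ i ∈ S, 0 ≤ (if G.Reachable i v then 2 * (2 : ℝ)⁻¹ ^ G.dist i v else 0) := by
    intro i _
    split
    · positivity
    · exact le_refl 0
  exact h1.trans (Finset.single_le_sum h2 hs)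

open Classical in
lemma pair_bound {V : Type*} (G : SimpleGraph V) (S : Finset V) (v s t : V)
    (hs : s ∈ S) (ht : t ∈ S) (hst : s ≠ t)
    (hrs : G.Reachable s v) (hds : G.dist s v ≤ 2)
    (hrt : G.Reachable t v) (hdt : G.dist t v ≤ 2) :
    1 ≤ expWeight G S v := by
  unfold expWeight
  have hsub : ({s, t} : Finset V) ⊆ S := by
    intro z hz
    rcases Finset.mem_insert.mp hz with rfl | hz
    · exact hs
    · exact (Finset.mem_singleton.mp hz) ▸ ht
  have hnn : ∀ i ∈ S, i ∉ ({s, t} : Finset V) →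
      0 ≤ (if G.Reachable i v then 2 * (2 : ℝ)⁻¹ ^ G.dist i v else 0) := by
    intro i _ _
    split
    · positivity
    · exact le_refl 0
  have hmono := Finset.sum_le_sum_of_subset_of_nonneg hsub hnn
  rw [Finset.sum_pair hst] at hmono
  have hfs : (1 / 2 : ℝ) ≤ (if G.Reachable s v then 2 * (2 : ℝ)⁻¹ ^ G.dist s v else 0) := by
    rw [if_pos hrs]
    have := pow_le_pow_of_le_one (by norm_num : (0:ℝ) ≤ 2⁻¹) (by norm_num : (2:ℝ)⁻¹ ≤ 1) hds
    norm_num at this ⊢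
    linarith
  have hft : (1 / 2 : ℝ) ≤ (if G.Reachable t v then 2 * (2 : ℝ)⁻¹ ^ G.dist t v else 0) := by
    rw [if_pos hrt]
    have := pow_le_pow_of_le_one (by norm_num : (0:ℝ) ≤ 2⁻¹) (by norm_num : (2:ℝ)⁻¹ ≤ 1) hdt
    norm_num at this ⊢
    linarith
  linarith

end ApNet16
namespace ApNet16

lemma main (A : ApollonianNetwork) (k : ℕ) (hk : 5 ≤ k) :
    porousExpDomNum (A.G k) ≤ (2 * 3 ^ (k - 5) : ℕ∞) := by
  classical
  obtain ⟨a, b, c, hab, hac, hbc, hU1⟩ := A.U1_card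
  have ha1 : A.gen a = 1 := by
    have h : a ∈ ({a, b, c} : Set A.Vert) := by simp
    rw [← hU1] at h; exact h
  have hb1 : A.gen b = 1 := by
    have h : b ∈ ({a, b, c} : Set A.Vert) := by simp
    rw [← hU1] at h; exact h
  have hc1 : A.gen c = 1 := by
    have h : c ∈ ({a, b, c} : Set A.Vert) := by simp
    rw [← hU1] at h; exact h
  have hadj_ab := A.U1_complete a b ha1 hb1 hab
  have hadj_ac := A.U1_complete a c ha1 hc1 hac
  have hadj_bc := A.U1_complete b c hb1 hc1 hbc
  obtain ⟨d, ⟨hd2, hdD⟩, _⟩ := A.attach 1 le_rfl a b c ha1 (le_of_eq hb1) (le_of_eq hc1)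
    hbc hadj_ab hadj_ac hadj_bc
  have hadj_da : A.adj d a := by
    have h : a ∈ {w | A.adj d w ∧ A.gen w ≤ 1} := by rw [hdD]; simp
    exact h.1
  have hadj_db : A.adj d b := by
    have h : b ∈ {w | A.adj d w ∧ A.gen w ≤ 1} := by rw [hdD]; simp
    exact h.1
  have hadj_dc : A.adj d c := by
    have h : c ∈ {w | A.adj d w ∧ A.gen w ≤ 1} := by rw [hdD]; simp
    exact h.1
  set m := k - 3 with hm
  have hm2 : 2 ≤ m := by omega
  obtain ⟨hWfin, hWcard⟩ := Wset_card A m hm2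
  set Sm : Set A.Vert := {w | A.gen w ≤ m ∧ w ≠ b ∧ w ≠ c} with hSmdef
  have hSm_sub : Sm ⊆ {a} ∪ Wset A m := by
    rintro w ⟨h1, h2, h3⟩
    by_cases hg : A.gen w = 1
    · left
      have hw : w ∈ {v | A.gen v = 1} := hg
      rw [hU1] at hw
      simp only [Set.mem_insert_iff, Set.mem_singleton_iff] at hw
      rcases hw with rfl | rfl | rfl
      · exact rfl
      · exact absurd rfl h2
      · exact absurd rfl h3
    · right
      exact ⟨by have := A.gen_pos w; omega, h1⟩
  have hSmFin : Sm.Finite := ((Set.finite_singleton a).union hWfin).subset hSm_sub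
  have hSmcard : Sm.ncard ≤ 1 + (Wset A m).ncard := by
    calc Sm.ncard ≤ ({a} ∪ Wset A m).ncard :=
          Set.ncard_le_ncard hSm_sub ((Set.finite_singleton a).union hWfin)
      _ ≤ ({a} : Set A.Vert).ncard + (Wset A m).ncard := Set.ncard_union_le _ _
      _ = 1 + (Wset A m).ncard := by rw [Set.ncard_singleton]
  set SubS : Set {v : A.Vert // A.gen v ≤ k} := Subtype.val ⁻¹' Sm with hSubSdef
  have hSubFin : SubS.Finite := hSmFin.preimage (Subtype.val_injective.injOn)
  set S : Finset {v : A.Vert // A.gen v ≤ k} := hSubFin.toFinset with hSdef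
  have hmemS : ∀ w : {v : A.Vert // A.gen v ≤ k}, w.1 ∈ Sm → w ∈ S := by
    intro w hw
    rw [hSdef, Set.Finite.mem_toFinset]
    exact hw
  have himg : Subtype.val '' SubS = Sm := by
    apply Set.image_preimage_eq_iff.mpr
    rw [Subtype.range_coe_subtype]
    intro w hw
    show A.gen w ≤ k
    have := hw.1
    omega
  have hcard : S.card = Sm.ncard := by
    rw [hSdef, ← Set.ncard_eq_toFinset_card _ hSubFin,
      ← Set.ncard_image_of_injective SubS Subtype.val_injective, himg]
  have hpow : (3 : ℕ) ^ (m - 1) = 3 * 3 ^ (k - 5) := by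
    rw [show m - 1 = (k - 5) + 1 by omega, pow_succ, mul_comm]
  have ht : 0 < 3 ^ (k - 5) := by positivity
  have hcard2 : S.card ≤ 2 * 3 ^ (k - 5) := by
    rw [hcard]
    rw [hpow] at hWcard
    omega
  have hak : A.gen a ≤ k := by omega
  have hdk : A.gen d ≤ k := by omega
  have haSm : a ∈ Sm := ⟨by omega, hab, hac⟩
  have haS : (⟨a, hak⟩ : {v : A.Vert // A.gen v ≤ k}) ∈ S := hmemS _ haSm
  have hdb : d ≠ b := by intro e; rw [e] at hd2; omega
  have hdc : d ≠ c := by intro e; rw [e] at hd2; omega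
  have hdSm : d ∈ Sm := ⟨by omega, hdb, hdc⟩
  have hdS : (⟨d, hdk⟩ : {v : A.Vert // A.gen v ≤ k}) ∈ S := hmemS _ hdSm
  have had : a ≠ d := by intro e; rw [e] at ha1; omega
  have hadS : (⟨a, hak⟩ : {v : A.Vert // A.gen v ≤ k}) ≠ ⟨d, hdk⟩ := by
    intro e; exact had (congrArg Subtype.val e)
  have hdom : IsPorousExpDomSet (A.G k) S := by
    intro v
    obtain ⟨vv, hvk⟩ := v
    by_cases hvSm : vv ∈ Sm
    · have h := single_bound (A.G k) S ⟨vv, hvk⟩ ⟨vv, hvk⟩ (hmemS _ hvSm) 1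
        (SimpleGraph.Reachable.refl _) (by rw [SimpleGraph.dist_self]; omega)
      norm_num at h
      linarith
    · by_cases hgv : A.gen vv ≤ m
      · have hbc' : vv = b ∨ vv = c := by
          by_contra hcon
          push_neg at hcon
          exact hvSm ⟨hgv, hcon.1, hcon.2⟩
        rcases hbc' with rfl | rfl
        · have h1 : (A.G k).Adj ⟨a, hak⟩ ⟨vv, hvk⟩ := hadj_ab
          have h2 : (A.G k).Adj ⟨d, hdk⟩ ⟨vv, hvk⟩ := hadj_db
          obtain ⟨hr1, hdd1⟩ := reachable_dist_one h1
          obtain ⟨hr2, hdd2⟩ := reachable_dist_one h2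
          exact pair_bound _ S _ _ _ haS hdS hadS hr1 (by omega) hr2 (by omega)
        · have h1 : (A.G k).Adj ⟨a, hak⟩ ⟨vv, hvk⟩ := hadj_ac
          have h2 : (A.G k).Adj ⟨d, hdk⟩ ⟨vv, hvk⟩ := hadj_dc
          obtain ⟨hr1, hdd1⟩ := reachable_dist_one h1
          obtain ⟨hr2, hdd2⟩ := reachable_dist_one h2
          exact pair_bound _ S _ _ _ haS hdS hadS hr1 (by omega) hr2 (by omega)
      · obtain ⟨s, hadjvs, hsle⟩ := low_nbr A m hm2 vv (by omega) (by have := hvk; omega)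
        have hsk : A.gen s ≤ k := by omega
        by_cases hsbc : s = b ∨ s = c
        · rcases hsbc with rfl | rfl
          · have h1 : (A.G k).Adj ⟨a, hak⟩ ⟨s, hsk⟩ := hadj_ab
            have h2 : (A.G k).Adj ⟨s, hsk⟩ ⟨vv, hvk⟩ := A.adj_symm vv s hadjvs
            have h3 : (A.G k).Adj ⟨d, hdk⟩ ⟨s, hsk⟩ := hadj_db
            obtain ⟨hr1, hdd1⟩ := reachable_dist_two h1 h2
            obtain ⟨hr2, hdd2⟩ := reachable_dist_two h3 h2
            exact pair_bound _ S _ _ _ haS hdS hadS hr1 hdd1 hr2 hdd2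
          · have h1 : (A.G k).Adj ⟨a, hak⟩ ⟨s, hsk⟩ := hadj_ac
            have h2 : (A.G k).Adj ⟨s, hsk⟩ ⟨vv, hvk⟩ := A.adj_symm vv s hadjvs
            have h3 : (A.G k).Adj ⟨d, hdk⟩ ⟨s, hsk⟩ := hadj_dc
            obtain ⟨hr1, hdd1⟩ := reachable_dist_two h1 h2
            obtain ⟨hr2, hdd2⟩ := reachable_dist_two h3 h2
            exact pair_bound _ S _ _ _ haS hdS hadS hr1 hdd1 hr2 hdd2
        · push_neg at hsbc
          have hsSm : s ∈ Sm := ⟨hsle, hsbc.1, hsbc.2⟩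
          have hsS : (⟨s, hsk⟩ : {v : A.Vert // A.gen v ≤ k}) ∈ S := hmemS _ hsSm
          have h1 : (A.G k).Adj ⟨s, hsk⟩ ⟨vv, hvk⟩ := A.adj_symm vv s hadjvs
          obtain ⟨hr1, hdd1⟩ := reachable_dist_one h1
          have h := single_bound (A.G k) S ⟨vv, hvk⟩ ⟨s, hsk⟩ hsS 1 hr1 hdd1
          norm_num at h
          linarith
  have hmem : ((S.card : ℕ∞)) ∈
      {n : ℕ∞ | ∃ S' : Finset {v : A.Vert // A.gen v ≤ k},
        IsPorousExpDomSet (A.G k) S' ∧ (S'.card : ℕ∞) = n} := ⟨S, hdom, rfl⟩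
  calc porousExpDomNum (A.G k) ≤ (S.card : ℕ∞) := sInf_le hmem
    _ ≤ (2 * 3 ^ (k - 5) : ℕ∞) := by exact_mod_cast hcard2

end ApNet16

theorem stmt16 (A : ApollonianNetwork) (k : ℕ) (hk : 5 ≤ k) :
    porousExpDomNum (A.G k) ≤ (2 * 3 ^ (k - 5) : ℕ∞) := ApNet16.main A k hk
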